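/- Let R₁, R₂, β > 0, let m be a Borel probability measure on ℝ^d supported in B̄(R₁), let x ∈ B̄(R₁), and let θ = (θ_Q, θ_K, θ_V, θ_O) and ϑ = (ϑ_Q, ϑ_K, ϑ_V, ϑ_O) be parameters in 𝔖(R₂). Then ‖θ_Oᵀ θ_V γ(β θ_Kᵀ θ_Q x, m) − ϑ_Oᵀ ϑ_V γ(β ϑ_Kᵀ ϑ_Q x, m)‖ ≤ 2 R₁ R₂ · max(1, 2β R₁² R₂²) · ‖θ − ϑ‖_F, where ‖θ − ϑ‖_F denotes the square root of the sum of the squared Frobenius norms of the four block differences. -/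

import Mathlib

open MeasureTheory
open scoped RealInnerProductSpace

/-- The normalisation constant `γ₂(z, μ) = ∫ exp⟨z,y⟩ dμ(y)`. -/
noncomputable def gamma2 {d : ℕ} (z : EuclideanSpace ℝ (Fin d))
    (μ : Measure (EuclideanSpace ℝ (Fin d))) : ℝ :=
  ∫ y, Real.exp ⟪z, y⟫ ∂μ

/-- The attention map `γ(z, μ) = (∫ exp⟨z,y⟩ • y dμ(y)) / γ₂(z, μ)`. -/
noncomputable def gammaAttn {d : ℕ} (z : EuclideanSpace ℝ (Fin d))
    (μ : Measure (EuclideanSpace ℝ (Fin d))) : EuclideanSpace ℝ (Fin d) :=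
  (gamma2 z μ)⁻¹ • ∫ y, Real.exp ⟪z, y⟫ • y ∂μ

open Matrix


/-- Matrices carry the product (Borel) measurable structure. -/
noncomputable instance matrixMeasurableSpace {k d : ℕ} :
    MeasurableSpace (Matrix (Fin k) (Fin d) ℝ) :=
  (inferInstance : MeasurableSpace (Fin k → Fin d → ℝ))

/-- A transformer parameter `θ = (θ_Q, θ_K, θ_V, θ_O)`, four `k × d` real matrices. -/
abbrev Param (k d : ℕ) : Type :=
  Matrix (Fin k) (Fin d) ℝ × Matrix (Fin k) (Fin d) ℝ ×
    Matrix (Fin k) (Fin d) ℝ × Matrix (Fin k) (Fin d) ℝ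

/-- Frobenius norm of a matrix. -/
noncomputable def frobNorm {k d : ℕ} (A : Matrix (Fin k) (Fin d) ℝ) : ℝ :=
  Real.sqrt (∑ i, ∑ j, (A i j) ^ 2)

/-- `𝔖(R)`: the set of parameters each of whose four blocks has Frobenius norm at most `R`. -/
def paramBall (k d : ℕ) (R : ℝ) : Set (Param k d) :=
  {θ | frobNorm θ.1 ≤ R ∧ frobNorm θ.2.1 ≤ R ∧ frobNorm θ.2.2.1 ≤ R ∧ frobNorm θ.2.2.2 ≤ R}

/-- A single attention head: `θ_Oᵀ θ_V γ(β θ_Kᵀ θ_Q x, m)`. -/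
noncomputable def attnHead {k d : ℕ} (β : ℝ) (x : EuclideanSpace ℝ (Fin d))
    (m : MeasureTheory.Measure (EuclideanSpace ℝ (Fin d))) (θ : Param k d) :
    EuclideanSpace ℝ (Fin d) :=
  Matrix.toEuclideanLin (θ.2.2.2ᵀ * θ.2.2.1)
    (gammaAttn (β • Matrix.toEuclideanLin (θ.2.1ᵀ * θ.1) x) m)

/-- The multi-head attention velocity field `Γ(x, m, ν) = ∫ θ_Oᵀ θ_V γ(β θ_Kᵀ θ_Q x, m) dν(θ)`. -/
noncomputable def attnGamma {k d : ℕ} (β : ℝ) (x : EuclideanSpace ℝ (Fin d))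
    (m : MeasureTheory.Measure (EuclideanSpace ℝ (Fin d)))
    (ν : MeasureTheory.Measure (Param k d)) : EuclideanSpace ℝ (Fin d) :=
  ∫ θ, attnHead β x m θ ∂ν

/-- Combined Frobenius norm of the difference of two parameters: the square root of the sum
of the squared Frobenius norms of the four block differences. -/
noncomputable def paramDiffNorm {k d : ℕ} (θ ϑ : Param k d) : ℝ :=
  Real.sqrt (frobNorm (θ.1 - ϑ.1) ^ 2 + frobNorm (θ.2.1 - ϑ.2.1) ^ 2 +
    frobNorm (θ.2.2.1 - ϑ.2.2.1) ^ 2 + frobNorm (θ.2.2.2 - ϑ.2.2.2) ^ 2)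



lemma sinh_le_mul_cosh {u : ℝ} (hu : 0 ≤ u) : Real.sinh u ≤ u * Real.cosh u := by
  have h : ∀ t ∈ Set.Ici (0:ℝ), HasDerivAt (fun s => s * Real.cosh s - Real.sinh s)
      (t * Real.sinh t) t := by
    intro t _
    have := ((hasDerivAt_id' t).mul (Real.hasDerivAt_cosh t)).sub (Real.hasDerivAt_sinh t)
    exact this.congr_deriv (by ring)
  have hmono : MonotoneOn (fun s => s * Real.cosh s - Real.sinh s) (Set.Ici 0) := by
    apply monotoneOn_of_deriv_nonneg (convex_Ici 0)
    · exact (Continuous.continuousOn (by continuity))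
    · intro t ht
      rw [interior_Ici] at ht
      exact ((h t (Set.mem_Ici.2 (Set.mem_Ioi.1 ht).le)).differentiableAt).differentiableWithinAt
    · intro t ht
      rw [interior_Ici] at ht
      rw [(h t (Set.mem_Ici.2 (Set.mem_Ioi.1 ht).le)).deriv]
      exact mul_nonneg (Set.mem_Ioi.1 ht).le (Real.sinh_nonneg_iff.2 (Set.mem_Ioi.1 ht).le)
  have := hmono (Set.self_mem_Ici) (Set.mem_Ici.2 hu) hu
  simp at this
  linarith

lemma abs_exp_sub_exp (a b : ℝ) :
    |Real.exp a - Real.exp b| ≤ (Real.exp a + Real.exp b) / 2 * |a - b| := by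
  have key : ∀ a b : ℝ, b ≤ a → Real.exp a - Real.exp b ≤ (Real.exp a + Real.exp b) / 2 * (a - b) := by
    intro a b hba
    have hu : 0 ≤ (a - b) / 2 := by linarith
    have h1 := sinh_le_mul_cosh hu
    have hs : Real.sinh ((a-b)/2) = (Real.exp ((a-b)/2) - Real.exp (-((a-b)/2))) / 2 := Real.sinh_eq _
    have hc : Real.cosh ((a-b)/2) = (Real.exp ((a-b)/2) + Real.exp (-((a-b)/2))) / 2 := Real.cosh_eq _
    have e1 : Real.exp ((a+b)/2) * Real.exp ((a-b)/2) = Real.exp a := by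
      rw [← Real.exp_add]; ring_nf
    have e2 : Real.exp ((a+b)/2) * Real.exp (-((a-b)/2)) = Real.exp b := by
      rw [← Real.exp_add]; ring_nf
    have hfac : Real.exp a - Real.exp b = 2 * Real.exp ((a+b)/2) * Real.sinh ((a-b)/2) := by
      rw [hs]; linear_combination e2 - e1
    have hfac2 : (Real.exp a + Real.exp b) / 2 = Real.exp ((a+b)/2) * Real.cosh ((a-b)/2) := by
      rw [hc]; linear_combination -(e1 + e2)/2
    rw [hfac, hfac2]
    have he : 0 < Real.exp ((a+b)/2) := Real.exp_pos _
    calc 2 * Real.exp ((a+b)/2) * Real.sinh ((a-b)/2)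
        ≤ 2 * Real.exp ((a+b)/2) * ((a-b)/2 * Real.cosh ((a-b)/2)) := by
          apply mul_le_mul_of_nonneg_left h1 (by positivity)
      _ = Real.exp ((a+b)/2) * Real.cosh ((a-b)/2) * (a - b) := by ring
  rcases le_total b a with h | h
  · rw [abs_of_nonneg (by linarith [Real.exp_le_exp.2 h] : (0:ℝ) ≤ Real.exp a - Real.exp b),
      abs_of_nonneg (by linarith : (0:ℝ) ≤ a - b)]
    exact key a b h
  · rw [abs_sub_comm, abs_sub_comm a b,
      abs_of_nonneg (by linarith [Real.exp_le_exp.2 h] : (0:ℝ) ≤ Real.exp b - Real.exp a),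
      abs_of_nonneg (by linarith : (0:ℝ) ≤ b - a)]
    have := key b a h
    linarith


lemma frobNorm_nonneg {k d : ℕ} (A : Matrix (Fin k) (Fin d) ℝ) : 0 ≤ frobNorm A :=
  Real.sqrt_nonneg _

lemma frobNorm_transpose {k d : ℕ} (A : Matrix (Fin k) (Fin d) ℝ) :
    frobNorm Aᵀ = frobNorm A := by
  unfold frobNorm
  rw [Finset.sum_comm]
  simp [Matrix.transpose_apply]

lemma toEuclideanLin_norm_le {a b : ℕ} (M : Matrix (Fin a) (Fin b) ℝ)
    (v : EuclideanSpace ℝ (Fin b)) :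
    ‖Matrix.toEuclideanLin M v‖ ≤ frobNorm M * ‖v‖ := by
  have hv2 : ‖v‖ ^ 2 = ∑ j, (v j) ^ 2 := by
    rw [EuclideanSpace.norm_eq, Real.sq_sqrt (by positivity)]
    simp [Real.norm_eq_abs, sq_abs]
  have happ : ∀ i, (Matrix.toEuclideanLin M v) i = ∑ j, M i j * v j := by
    intro i
    rw [Matrix.toEuclideanLin_apply]
    rfl
  have key : ‖Matrix.toEuclideanLin M v‖ ^ 2 ≤ (∑ i, ∑ j, (M i j) ^ 2) * ‖v‖ ^ 2 := by
    rw [EuclideanSpace.norm_eq, Real.sq_sqrt (by positivity), hv2]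
    simp only [Real.norm_eq_abs, sq_abs, happ]
    rw [Finset.sum_mul]
    apply Finset.sum_le_sum
    intro i _
    exact Finset.sum_mul_sq_le_sq_mul_sq _ _ _
  calc ‖Matrix.toEuclideanLin M v‖ = Real.sqrt (‖Matrix.toEuclideanLin M v‖ ^ 2) :=
        (Real.sqrt_sq (norm_nonneg _)).symm
    _ ≤ Real.sqrt ((∑ i, ∑ j, (M i j) ^ 2) * ‖v‖ ^ 2) := Real.sqrt_le_sqrt key
    _ = frobNorm M * ‖v‖ := by
        rw [Real.sqrt_mul (by positivity), Real.sqrt_sq (norm_nonneg _)]; rfl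

lemma toEuclideanLin_mul_apply {a b c : ℕ} (A : Matrix (Fin a) (Fin b) ℝ)
    (B : Matrix (Fin b) (Fin c) ℝ) (v : EuclideanSpace ℝ (Fin c)) :
    Matrix.toEuclideanLin (A * B) v = Matrix.toEuclideanLin A (Matrix.toEuclideanLin B v) := by
  simp only [Matrix.toEuclideanLin_apply]
  rw [Matrix.mulVec_mulVec]

lemma opFrob {a b c : ℕ} (A : Matrix (Fin b) (Fin a) ℝ)
    (B : Matrix (Fin b) (Fin c) ℝ) (v : EuclideanSpace ℝ (Fin c)) :
    ‖Matrix.toEuclideanLin (Aᵀ * B) v‖ ≤ frobNorm A * frobNorm B * ‖v‖ := by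
  rw [toEuclideanLin_mul_apply]
  calc ‖Matrix.toEuclideanLin Aᵀ (Matrix.toEuclideanLin B v)‖
      ≤ frobNorm Aᵀ * ‖Matrix.toEuclideanLin B v‖ := toEuclideanLin_norm_le _ _
    _ ≤ frobNorm Aᵀ * (frobNorm B * ‖v‖) := by
        exact mul_le_mul_of_nonneg_left (toEuclideanLin_norm_le _ _) (frobNorm_nonneg _)
    _ = frobNorm A * frobNorm B * ‖v‖ := by rw [frobNorm_transpose]; ring


lemma toEuclideanLin_sub_apply {a b : ℕ} (A B : Matrix (Fin a) (Fin b) ℝ)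
    (v : EuclideanSpace ℝ (Fin b)) :
    Matrix.toEuclideanLin (A - B) v = Matrix.toEuclideanLin A v - Matrix.toEuclideanLin B v := by
  rw [map_sub]; rfl

lemma toEuclideanLin_add_apply {a b : ℕ} (A B : Matrix (Fin a) (Fin b) ℝ)
    (v : EuclideanSpace ℝ (Fin b)) :
    Matrix.toEuclideanLin (A + B) v = Matrix.toEuclideanLin A v + Matrix.toEuclideanLin B v := by
  rw [map_add]; rfl


variable {d : ℕ} {R₁ : ℝ} {m : Measure (EuclideanSpace ℝ (Fin d))}

lemma ae_norm_le [IsProbabilityMeasure m] (hm : m (Metric.closedBall 0 R₁) = 1) :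
    ∀ᵐ y ∂m, ‖y‖ ≤ R₁ := by
  have hc : m (Metric.closedBall (0 : EuclideanSpace ℝ (Fin d)) R₁)ᶜ = 0 := by
    rw [measure_compl Metric.isClosed_closedBall.measurableSet (measure_ne_top m _), hm, measure_univ,
      tsub_self]
  filter_upwards [measure_eq_zero_iff_ae_notMem.1 hc] with y hy
  have hmem : y ∈ Metric.closedBall (0 : EuclideanSpace ℝ (Fin d)) R₁ := Set.not_notMem.1 hy
  simpa [Metric.mem_closedBall, dist_zero_right] using hmem

lemma exp_inner_le (u y : EuclideanSpace ℝ (Fin d)) (hy : ‖y‖ ≤ R₁) :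
    Real.exp ⟪u, y⟫ ≤ Real.exp (‖u‖ * R₁) :=
  Real.exp_le_exp.2 ((real_inner_le_norm u y).trans
    (mul_le_mul_of_nonneg_left hy (norm_nonneg u)))

lemma exp_inner_ge (u y : EuclideanSpace ℝ (Fin d)) (hy : ‖y‖ ≤ R₁) :
    Real.exp (-(‖u‖ * R₁)) ≤ Real.exp ⟪u, y⟫ := by
  apply Real.exp_le_exp.2
  have h1 : |⟪u, y⟫| ≤ ‖u‖ * ‖y‖ := abs_real_inner_le_norm u y
  have h2 : ‖u‖ * ‖y‖ ≤ ‖u‖ * R₁ := mul_le_mul_of_nonneg_left hy (norm_nonneg u)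
  have := abs_le.1 h1
  linarith

lemma integrable_bdd {α : Type*} [MeasurableSpace α] {μ : Measure α} [IsFiniteMeasure μ]
    {G : Type*} [NormedAddCommGroup G] {h : α → G} (hc : AEStronglyMeasurable h μ) (C : ℝ)
    (hb : ∀ᵐ a ∂μ, ‖h a‖ ≤ C) : Integrable h μ :=
  (integrable_const C).mono' hc hb

lemma integrable_exp_inner [IsProbabilityMeasure m] (hm : m (Metric.closedBall 0 R₁) = 1)
    (z : EuclideanSpace ℝ (Fin d)) : Integrable (fun y => Real.exp ⟪z, y⟫) m := by
  apply integrable_bdd (Continuous.aestronglyMeasurable (show Continuous fun y : EuclideanSpace ℝ (Fin d) => Real.exp ⟪z, y⟫ from Real.continuous_exp.comp (continuous_const.inner continuous_id))) (Real.exp (‖z‖ * R₁))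
  filter_upwards [ae_norm_le hm] with y hy
  rw [Real.norm_eq_abs, Real.abs_exp]
  exact exp_inner_le z y hy

lemma integrable_exp_inner_smul [IsProbabilityMeasure m] (hm : m (Metric.closedBall 0 R₁) = 1)
    (z : EuclideanSpace ℝ (Fin d)) : Integrable (fun y => Real.exp ⟪z, y⟫ • y) m := by
  apply integrable_bdd (Continuous.aestronglyMeasurable (show Continuous fun y : EuclideanSpace ℝ (Fin d) => Real.exp ⟪z, y⟫ • y from (Real.continuous_exp.comp (continuous_const.inner continuous_id)).smul continuous_id)) (Real.exp (‖z‖ * R₁) * R₁)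
  filter_upwards [ae_norm_le hm] with y hy
  rw [norm_smul, Real.norm_eq_abs, Real.abs_exp]
  exact mul_le_mul (exp_inner_le z y hy) hy (norm_nonneg _) (Real.exp_pos _).le

lemma gamma2_pos [IsProbabilityMeasure m] (hm : m (Metric.closedBall 0 R₁) = 1)
    (z : EuclideanSpace ℝ (Fin d)) : 0 < gamma2 z m := by
  have hmono : Real.exp (-(‖z‖ * R₁)) ≤ gamma2 z m := by
    rw [gamma2]
    have h := integral_mono_ae (integrable_const (Real.exp (-(‖z‖ * R₁))))
      (integrable_exp_inner hm z)
      (by filter_upwards [ae_norm_le hm] with y hy using exp_inner_ge z y hy)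
    simpa using h
  exact lt_of_lt_of_le (Real.exp_pos _) hmono

lemma norm_gammaAttn_le [IsProbabilityMeasure m] (hm : m (Metric.closedBall 0 R₁) = 1)
    (z : EuclideanSpace ℝ (Fin d)) : ‖gammaAttn z m‖ ≤ R₁ := by
  have hZ := gamma2_pos hm z
  have hnum : ‖∫ y, Real.exp ⟪z, y⟫ • y ∂m‖ ≤ R₁ * gamma2 z m := by
    calc ‖∫ y, Real.exp ⟪z, y⟫ • y ∂m‖ ≤ ∫ y, ‖Real.exp ⟪z, y⟫ • y‖ ∂m :=
          norm_integral_le_integral_norm _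
      _ ≤ ∫ y, R₁ * Real.exp ⟪z, y⟫ ∂m := by
          apply integral_mono_ae ((integrable_exp_inner_smul hm z).norm)
            ((integrable_exp_inner hm z).const_mul R₁)
          filter_upwards [ae_norm_le hm] with y hy
          rw [norm_smul, Real.norm_eq_abs, Real.abs_exp]
          calc Real.exp ⟪z, y⟫ * ‖y‖ ≤ Real.exp ⟪z, y⟫ * R₁ :=
                mul_le_mul_of_nonneg_left hy (Real.exp_pos _).le
            _ = R₁ * Real.exp ⟪z, y⟫ := mul_comm _ _
      _ = R₁ * gamma2 z m := by rw [integral_const_mul]; rfl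
  rw [gammaAttn, norm_smul, Real.norm_eq_abs, abs_of_pos (inv_pos.2 hZ)]
  calc (gamma2 z m)⁻¹ * ‖∫ y, Real.exp ⟪z, y⟫ • y ∂m‖
      ≤ (gamma2 z m)⁻¹ * (R₁ * gamma2 z m) := by
        exact mul_le_mul_of_nonneg_left hnum (inv_pos.2 hZ).le
    _ = R₁ := by field_simp

section Lip

lemma gammaAttn_lipschitz [IsProbabilityMeasure m] (hR₁ : 0 ≤ R₁)
    (hm : m (Metric.closedBall 0 R₁) = 1) (z w : EuclideanSpace ℝ (Fin d)) :
    ‖gammaAttn z m - gammaAttn w m‖ ≤ 2 * R₁ ^ 2 * ‖z - w‖ := by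
  have hZ : 0 < gamma2 z m := gamma2_pos hm z
  have hW : 0 < gamma2 w m := gamma2_pos hm w
  set Z := gamma2 z m with hZdef
  set W := gamma2 w m with hWdef
  set Nz := ∫ y, Real.exp ⟪z, y⟫ • y ∂m with hNz
  set Nw := ∫ y, Real.exp ⟪w, y⟫ • y ∂m with hNw
  set C := Real.exp (‖z‖ * R₁) * Real.exp (‖w‖ * R₁) with hC
  have hCpos : 0 < C := by positivity
  -- a.e. bound on the product
  have hprod_ae : ∀ᵐ p ∂(m.prod m), ‖p.1‖ ≤ R₁ ∧ ‖p.2‖ ≤ R₁ := by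
    have hset : MeasurableSet {p : EuclideanSpace ℝ (Fin d) × EuclideanSpace ℝ (Fin d) | ‖p.1‖ ≤ R₁ ∧ ‖p.2‖ ≤ R₁} := by
      rw [Set.setOf_and]
      exact (measurableSet_le (continuous_norm.comp continuous_fst).measurable
          measurable_const).inter
        (measurableSet_le (continuous_norm.comp continuous_snd).measurable measurable_const)
    rw [MeasureTheory.Measure.ae_prod_iff_ae_ae hset]
    filter_upwards [ae_norm_le hm] with a ha
    filter_upwards [ae_norm_le hm] with b hb
    exact ⟨ha, hb⟩
  -- continuity helpers
  have hcont1 : Continuous fun p : EuclideanSpace ℝ (Fin d) × EuclideanSpace ℝ (Fin d) => Real.exp ⟪z, p.1⟫ * Real.exp ⟪w, p.2⟫ :=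
    (Real.continuous_exp.comp (continuous_const.inner continuous_fst)).mul
      (Real.continuous_exp.comp (continuous_const.inner continuous_snd))
  have hcont2 : Continuous fun p : EuclideanSpace ℝ (Fin d) × EuclideanSpace ℝ (Fin d) => Real.exp ⟪z, p.2⟫ * Real.exp ⟪w, p.1⟫ :=
    (Real.continuous_exp.comp (continuous_const.inner continuous_snd)).mul
      (Real.continuous_exp.comp (continuous_const.inner continuous_fst))
  -- pointwise bounds
  have hb1 : ∀ᵐ p ∂(m.prod m),
      Real.exp ⟪z, p.1⟫ * Real.exp ⟪w, p.2⟫ ≤ C ∧ Real.exp ⟪z, p.2⟫ * Real.exp ⟪w, p.1⟫ ≤ C := by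
    filter_upwards [hprod_ae] with p hp
    constructor
    · exact mul_le_mul (exp_inner_le z p.1 hp.1) (exp_inner_le w p.2 hp.2)
        (Real.exp_pos _).le (Real.exp_pos _).le
    · exact mul_le_mul (exp_inner_le z p.2 hp.2) (exp_inner_le w p.1 hp.1)
        (Real.exp_pos _).le (Real.exp_pos _).le
  -- integrability of the various product integrands
  have hint_a : Integrable (fun p : EuclideanSpace ℝ (Fin d) × EuclideanSpace ℝ (Fin d) => (Real.exp ⟪z, p.1⟫ * Real.exp ⟪w, p.2⟫) • p.1)
      (m.prod m) := by
    apply integrable_bdd ((hcont1.smul continuous_fst)).aestronglyMeasurable (C * R₁)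
    filter_upwards [hprod_ae, hb1] with p hp hbp
    change ‖(Real.exp ⟪z, p.1⟫ * Real.exp ⟪w, p.2⟫) • p.1‖ ≤ C * R₁
    rw [norm_smul, Real.norm_eq_abs, abs_of_pos (by positivity)]
    exact mul_le_mul hbp.1 hp.1 (norm_nonneg _) hCpos.le
  have hint_b : Integrable (fun p : EuclideanSpace ℝ (Fin d) × EuclideanSpace ℝ (Fin d) => (Real.exp ⟪z, p.2⟫ * Real.exp ⟪w, p.1⟫) • p.1)
      (m.prod m) := by
    apply integrable_bdd ((hcont2.smul continuous_fst)).aestronglyMeasurable (C * R₁)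
    filter_upwards [hprod_ae, hb1] with p hp hbp
    change ‖(Real.exp ⟪z, p.2⟫ * Real.exp ⟪w, p.1⟫) • p.1‖ ≤ C * R₁
    rw [norm_smul, Real.norm_eq_abs, abs_of_pos (by positivity)]
    exact mul_le_mul hbp.2 hp.1 (norm_nonneg _) hCpos.le
  have hint_a2 : Integrable (fun p : EuclideanSpace ℝ (Fin d) × EuclideanSpace ℝ (Fin d) => (Real.exp ⟪z, p.1⟫ * Real.exp ⟪w, p.2⟫) • p.2)
      (m.prod m) := by
    apply integrable_bdd ((hcont1.smul continuous_snd)).aestronglyMeasurable (C * R₁)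
    filter_upwards [hprod_ae, hb1] with p hp hbp
    change ‖(Real.exp ⟪z, p.1⟫ * Real.exp ⟪w, p.2⟫) • p.2‖ ≤ C * R₁
    rw [norm_smul, Real.norm_eq_abs, abs_of_pos (by positivity)]
    exact mul_le_mul hbp.1 hp.2 (norm_nonneg _) hCpos.le
  have hint_b2 : Integrable (fun p : EuclideanSpace ℝ (Fin d) × EuclideanSpace ℝ (Fin d) => (Real.exp ⟪z, p.2⟫ * Real.exp ⟪w, p.1⟫) • p.2)
      (m.prod m) := by
    apply integrable_bdd ((hcont2.smul continuous_snd)).aestronglyMeasurable (C * R₁)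
    filter_upwards [hprod_ae, hb1] with p hp hbp
    change ‖(Real.exp ⟪z, p.2⟫ * Real.exp ⟪w, p.1⟫) • p.2‖ ≤ C * R₁
    rw [norm_smul, Real.norm_eq_abs, abs_of_pos (by positivity)]
    exact mul_le_mul hbp.2 hp.2 (norm_nonneg _) hCpos.le
  have hint_s1 : Integrable (fun p : EuclideanSpace ℝ (Fin d) × EuclideanSpace ℝ (Fin d) => Real.exp ⟪z, p.1⟫ * Real.exp ⟪w, p.2⟫)
      (m.prod m) := by
    apply integrable_bdd hcont1.aestronglyMeasurable C
    filter_upwards [hb1] with p hbp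
    rw [Real.norm_eq_abs, abs_of_pos (by positivity)]
    exact hbp.1
  have hint_s2 : Integrable (fun p : EuclideanSpace ℝ (Fin d) × EuclideanSpace ℝ (Fin d) => Real.exp ⟪z, p.2⟫ * Real.exp ⟪w, p.1⟫)
      (m.prod m) := by
    apply integrable_bdd hcont2.aestronglyMeasurable C
    filter_upwards [hb1] with p hbp
    rw [Real.norm_eq_abs, abs_of_pos (by positivity)]
    exact hbp.2
  -- the main double integral
  set D : EuclideanSpace ℝ (Fin d) := ∫ p : EuclideanSpace ℝ (Fin d) × EuclideanSpace ℝ (Fin d),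
      (Real.exp ⟪z, p.1⟫ * Real.exp ⟪w, p.2⟫ - Real.exp ⟪z, p.2⟫ * Real.exp ⟪w, p.1⟫) • p.1
      ∂(m.prod m) with hDdef
  -- claim 1
  have claim1 : ∫ p : EuclideanSpace ℝ (Fin d) × EuclideanSpace ℝ (Fin d), (Real.exp ⟪z, p.1⟫ * Real.exp ⟪w, p.2⟫) • p.1 ∂(m.prod m)
      = W • Nz := by
    rw [MeasureTheory.integral_prod _ hint_a]
    have hin : ∀ x : EuclideanSpace ℝ (Fin d), (∫ y, (Real.exp ⟪z, x⟫ * Real.exp ⟪w, y⟫) • x ∂m)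
        = W • (Real.exp ⟪z, x⟫ • x) := by
      intro x
      have : (fun y : EuclideanSpace ℝ (Fin d) => (Real.exp ⟪z, x⟫ * Real.exp ⟪w, y⟫) • x)
          = fun y : EuclideanSpace ℝ (Fin d) => Real.exp ⟪w, y⟫ • (Real.exp ⟪z, x⟫ • x) := by
        funext y; rw [smul_smul, mul_comm]
      rw [this, integral_smul_const]
      rfl
    simp_rw [hin]
    rw [integral_smul]
  have claim2 : ∫ p : EuclideanSpace ℝ (Fin d) × EuclideanSpace ℝ (Fin d), (Real.exp ⟪z, p.2⟫ * Real.exp ⟪w, p.1⟫) • p.1 ∂(m.prod m)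
      = Z • Nw := by
    rw [MeasureTheory.integral_prod _ hint_b]
    have hin : ∀ x : EuclideanSpace ℝ (Fin d), (∫ y, (Real.exp ⟪z, y⟫ * Real.exp ⟪w, x⟫) • x ∂m)
        = Z • (Real.exp ⟪w, x⟫ • x) := by
      intro x
      have : (fun y : EuclideanSpace ℝ (Fin d) => (Real.exp ⟪z, y⟫ * Real.exp ⟪w, x⟫) • x)
          = fun y : EuclideanSpace ℝ (Fin d) => Real.exp ⟪z, y⟫ • (Real.exp ⟪w, x⟫ • x) := by
        funext y; rw [smul_smul]
      rw [this, integral_smul_const]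
      rfl
    simp_rw [hin]
    rw [integral_smul]
  have hD : D = W • Nz - Z • Nw := by
    rw [hDdef]
    simp_rw [sub_smul]
    rw [integral_sub hint_a hint_b, claim1, claim2]
  -- swap antisymmetry
  have hswap : (∫ p : EuclideanSpace ℝ (Fin d) × EuclideanSpace ℝ (Fin d),
      (Real.exp ⟪z, p.1⟫ * Real.exp ⟪w, p.2⟫ - Real.exp ⟪z, p.2⟫ * Real.exp ⟪w, p.1⟫) • p.2
      ∂(m.prod m)) = -D := by
    have hmapeq : Measure.map (⇑((MeasurableEquiv.prodComm : EuclideanSpace ℝ (Fin d) × EuclideanSpace ℝ (Fin d) ≃ᵐ EuclideanSpace ℝ (Fin d) × EuclideanSpace ℝ (Fin d)))) (m.prod m) = m.prod m :=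
      MeasureTheory.Measure.measurePreserving_swap.map_eq
    have h1 := MeasureTheory.integral_map_equiv (μ := m.prod m) ((MeasurableEquiv.prodComm : EuclideanSpace ℝ (Fin d) × EuclideanSpace ℝ (Fin d) ≃ᵐ EuclideanSpace ℝ (Fin d) × EuclideanSpace ℝ (Fin d)))
      (fun p : EuclideanSpace ℝ (Fin d) × EuclideanSpace ℝ (Fin d) =>
        (Real.exp ⟪z, p.1⟫ * Real.exp ⟪w, p.2⟫ - Real.exp ⟪z, p.2⟫ * Real.exp ⟪w, p.1⟫) • p.2)
    rw [hmapeq] at h1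
    rw [h1]
    show (∫ p : EuclideanSpace ℝ (Fin d) × EuclideanSpace ℝ (Fin d),
        (Real.exp ⟪z, p.2⟫ * Real.exp ⟪w, p.1⟫ - Real.exp ⟪z, p.1⟫ * Real.exp ⟪w, p.2⟫) • p.1
        ∂(m.prod m)) = -D
    have h3 : ∀ p : EuclideanSpace ℝ (Fin d) × EuclideanSpace ℝ (Fin d),
        (Real.exp ⟪z, p.2⟫ * Real.exp ⟪w, p.1⟫ - Real.exp ⟪z, p.1⟫ * Real.exp ⟪w, p.2⟫) • p.1
        = -((Real.exp ⟪z, p.1⟫ * Real.exp ⟪w, p.2⟫ - Real.exp ⟪z, p.2⟫ * Real.exp ⟪w, p.1⟫) • p.1)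
        := by
      intro p
      rw [← neg_smul]
      congr 1
      ring
    simp_rw [h3]
    rw [integral_neg]
  -- integrability of F • fst and F • snd
  have hint_F1 : Integrable (fun p : EuclideanSpace ℝ (Fin d) × EuclideanSpace ℝ (Fin d) =>
      (Real.exp ⟪z, p.1⟫ * Real.exp ⟪w, p.2⟫ - Real.exp ⟪z, p.2⟫ * Real.exp ⟪w, p.1⟫) • p.1)
      (m.prod m) := by
    simp_rw [sub_smul]; exact hint_a.sub hint_b
  have hint_F2 : Integrable (fun p : EuclideanSpace ℝ (Fin d) × EuclideanSpace ℝ (Fin d) =>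
      (Real.exp ⟪z, p.1⟫ * Real.exp ⟪w, p.2⟫ - Real.exp ⟪z, p.2⟫ * Real.exp ⟪w, p.1⟫) • p.2)
      (m.prod m) := by
    simp_rw [sub_smul]; exact hint_a2.sub hint_b2
  -- symmetrized identity
  have h2D : (∫ p : EuclideanSpace ℝ (Fin d) × EuclideanSpace ℝ (Fin d),
      (Real.exp ⟪z, p.1⟫ * Real.exp ⟪w, p.2⟫ - Real.exp ⟪z, p.2⟫ * Real.exp ⟪w, p.1⟫)
        • (p.1 - p.2) ∂(m.prod m)) = (2:ℝ) • D := by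
    simp_rw [smul_sub]
    rw [integral_sub hint_F1 hint_F2, hswap, ← hDdef, sub_neg_eq_add, two_smul]
  -- the pointwise bound
  have hbound : ∀ᵐ p ∂(m.prod m),
      ‖(Real.exp ⟪z, p.1⟫ * Real.exp ⟪w, p.2⟫ - Real.exp ⟪z, p.2⟫ * Real.exp ⟪w, p.1⟫)
        • (p.1 - p.2)‖ ≤
      (Real.exp ⟪z, p.1⟫ * Real.exp ⟪w, p.2⟫ + Real.exp ⟪z, p.2⟫ * Real.exp ⟪w, p.1⟫)
        * (2 * R₁ ^ 2 * ‖z - w‖) := by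
    filter_upwards [hprod_ae] with p hp
    have hyy : ‖p.1 - p.2‖ ≤ 2 * R₁ := (norm_sub_le _ _).trans (by linarith [hp.1, hp.2])
    have hF : Real.exp ⟪z, p.1⟫ * Real.exp ⟪w, p.2⟫ - Real.exp ⟪z, p.2⟫ * Real.exp ⟪w, p.1⟫
        = Real.exp (⟪z, p.1⟫ + ⟪w, p.2⟫) - Real.exp (⟪z, p.2⟫ + ⟪w, p.1⟫) := by
      rw [Real.exp_add, Real.exp_add]
    have hS : Real.exp ⟪z, p.1⟫ * Real.exp ⟪w, p.2⟫ + Real.exp ⟪z, p.2⟫ * Real.exp ⟪w, p.1⟫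
        = Real.exp (⟪z, p.1⟫ + ⟪w, p.2⟫) + Real.exp (⟪z, p.2⟫ + ⟪w, p.1⟫) := by
      rw [Real.exp_add, Real.exp_add]
    have hab : (⟪z, p.1⟫ + ⟪w, p.2⟫) - (⟪z, p.2⟫ + ⟪w, p.1⟫) = ⟪z - w, p.1 - p.2⟫ := by
      rw [inner_sub_left, inner_sub_right, inner_sub_right]
      ring
    have habs : |(⟪z, p.1⟫ + ⟪w, p.2⟫) - (⟪z, p.2⟫ + ⟪w, p.1⟫)| ≤ ‖z - w‖ * (2 * R₁) := by
      rw [hab]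
      exact (abs_real_inner_le_norm _ _).trans
        (mul_le_mul_of_nonneg_left hyy (norm_nonneg _))
    have hexp := abs_exp_sub_exp (⟪z, p.1⟫ + ⟪w, p.2⟫) (⟪z, p.2⟫ + ⟪w, p.1⟫)
    have hSpos : 0 < Real.exp (⟪z, p.1⟫ + ⟪w, p.2⟫) + Real.exp (⟪z, p.2⟫ + ⟪w, p.1⟫) := by
      positivity
    calc ‖(Real.exp ⟪z, p.1⟫ * Real.exp ⟪w, p.2⟫ - Real.exp ⟪z, p.2⟫ * Real.exp ⟪w, p.1⟫)
          • (p.1 - p.2)‖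
        = |Real.exp (⟪z, p.1⟫ + ⟪w, p.2⟫) - Real.exp (⟪z, p.2⟫ + ⟪w, p.1⟫)| * ‖p.1 - p.2‖ := by
          rw [norm_smul, Real.norm_eq_abs, hF]
      _ ≤ ((Real.exp (⟪z, p.1⟫ + ⟪w, p.2⟫) + Real.exp (⟪z, p.2⟫ + ⟪w, p.1⟫)) / 2
            * (‖z - w‖ * (2 * R₁))) * (2 * R₁) := by
          apply mul_le_mul _ hyy (norm_nonneg _) (by positivity)
          exact hexp.trans (mul_le_mul_of_nonneg_left habs (by positivity))
      _ = (Real.exp (⟪z, p.1⟫ + ⟪w, p.2⟫) + Real.exp (⟪z, p.2⟫ + ⟪w, p.1⟫))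
            * (2 * R₁ ^ 2 * ‖z - w‖) := by ring
      _ = (Real.exp ⟪z, p.1⟫ * Real.exp ⟪w, p.2⟫ + Real.exp ⟪z, p.2⟫ * Real.exp ⟪w, p.1⟫)
            * (2 * R₁ ^ 2 * ‖z - w‖) := by rw [hS]
  -- integral of the bound
  have hSint : (∫ p : EuclideanSpace ℝ (Fin d) × EuclideanSpace ℝ (Fin d),
      (Real.exp ⟪z, p.1⟫ * Real.exp ⟪w, p.2⟫ + Real.exp ⟪z, p.2⟫ * Real.exp ⟪w, p.1⟫)
        * (2 * R₁ ^ 2 * ‖z - w‖) ∂(m.prod m)) = 2 * (Z * W) * (2 * R₁ ^ 2 * ‖z - w‖) := by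
    rw [integral_mul_const, integral_add hint_s1 hint_s2]
    have hA : (∫ p : EuclideanSpace ℝ (Fin d) × EuclideanSpace ℝ (Fin d), Real.exp ⟪z, p.1⟫ * Real.exp ⟪w, p.2⟫ ∂(m.prod m)) = Z * W := by
      rw [MeasureTheory.integral_prod_mul (fun y => Real.exp ⟪z, y⟫) (fun y => Real.exp ⟪w, y⟫)]
      rfl
    have hB : (∫ p : EuclideanSpace ℝ (Fin d) × EuclideanSpace ℝ (Fin d), Real.exp ⟪z, p.2⟫ * Real.exp ⟪w, p.1⟫ ∂(m.prod m)) = Z * W := by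
      have hre : (fun p : EuclideanSpace ℝ (Fin d) × EuclideanSpace ℝ (Fin d) => Real.exp ⟪z, p.2⟫ * Real.exp ⟪w, p.1⟫)
          = fun p : EuclideanSpace ℝ (Fin d) × EuclideanSpace ℝ (Fin d) => Real.exp ⟪w, p.1⟫ * Real.exp ⟪z, p.2⟫ := by
        funext p; ring
      rw [hre,
        MeasureTheory.integral_prod_mul (fun y => Real.exp ⟪w, y⟫) (fun y => Real.exp ⟪z, y⟫)]
      exact mul_comm _ _
    rw [hA, hB]
    ring
  -- norm bound on D
  have hDle : ‖D‖ ≤ Z * W * (2 * R₁ ^ 2 * ‖z - w‖) := by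
    have h1 : ‖(2:ℝ) • D‖ ≤ 2 * (Z * W) * (2 * R₁ ^ 2 * ‖z - w‖) := by
      rw [← h2D, ← hSint]
      exact norm_integral_le_of_norm_le ((hint_s1.add hint_s2).mul_const _) hbound
    rw [norm_smul, Real.norm_eq_abs] at h1
    have : |(2:ℝ)| = 2 := by norm_num
    rw [this] at h1
    linarith
  -- conclude
  have hγeq : gammaAttn z m - gammaAttn w m = (Z * W)⁻¹ • D := by
    have hgz : gammaAttn z m = Z⁻¹ • Nz := rfl
    have hgw : gammaAttn w m = W⁻¹ • Nw := rfl
    have e1 : (Z * W)⁻¹ * W = Z⁻¹ := by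
      rw [mul_inv, mul_assoc, inv_mul_cancel₀ hW.ne', mul_one]
    have e2 : (Z * W)⁻¹ * Z = W⁻¹ := by
      rw [mul_inv, mul_comm Z⁻¹ W⁻¹, mul_assoc, inv_mul_cancel₀ hZ.ne', mul_one]
    rw [hgz, hgw, hD, smul_sub, smul_smul, smul_smul, e1, e2]
  have : ‖gammaAttn z m - gammaAttn w m‖ = ‖(Z * W)⁻¹ • D‖ := by rw [hγeq]
  rw [this, norm_smul, Real.norm_eq_abs, abs_of_pos (inv_pos.2 (mul_pos hZ hW))]
  calc (Z * W)⁻¹ * ‖D‖ ≤ (Z * W)⁻¹ * (Z * W * (2 * R₁ ^ 2 * ‖z - w‖)) :=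
        mul_le_mul_of_nonneg_left hDle (by positivity)
    _ = 2 * R₁ ^ 2 * ‖z - w‖ := by field_simp


end Lip

set_option maxHeartbeats 1000000 in
/-- Lipschitz continuity of a single attention head in its parameters:
`‖θ_Oᵀθ_V γ(βθ_Kᵀθ_Q x, m) − ϑ_Oᵀϑ_V γ(βϑ_Kᵀϑ_Q x, m)‖ ≤ 2R₁R₂ max(1, 2βR₁²R₂²) ‖θ − ϑ‖_F`. -/
theorem stmt_12 {k d : ℕ} (R₁ R₂ β : ℝ) (hR₁ : 0 < R₁) (hR₂ : 0 < R₂) (hβ : 0 < β)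
    (m : Measure (EuclideanSpace ℝ (Fin d))) [IsProbabilityMeasure m]
    (hm : m (Metric.closedBall 0 R₁) = 1)
    (x : EuclideanSpace ℝ (Fin d)) (hx : x ∈ Metric.closedBall (0 : EuclideanSpace ℝ (Fin d)) R₁)
    (θ ϑ : Param k d) (hθ : θ ∈ paramBall k d R₂) (hϑ : ϑ ∈ paramBall k d R₂) :
    ‖attnHead β x m θ - attnHead β x m ϑ‖ ≤
      2 * R₁ * R₂ * max 1 (2 * β * R₁ ^ 2 * R₂ ^ 2) * paramDiffNorm θ ϑ := by
  obtain ⟨hθQ, hθK, hθV, hθO⟩ := hθ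
  obtain ⟨hϑQ, hϑK, hϑV, hϑO⟩ := hϑ
  have hxR : ‖x‖ ≤ R₁ := by simpa [Metric.mem_closedBall, dist_zero_right] using hx
  set zθ := β • (Matrix.toEuclideanLin (θ.2.1ᵀ * θ.1)) x with hzθ
  set zϑ := β • (Matrix.toEuclideanLin (ϑ.2.1ᵀ * ϑ.1)) x with hzϑ
  set a := frobNorm (θ.1 - ϑ.1) with ha
  set b := frobNorm (θ.2.1 - ϑ.2.1) with hb
  set c := frobNorm (θ.2.2.1 - ϑ.2.2.1) with hc
  set e := frobNorm (θ.2.2.2 - ϑ.2.2.2) with he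
  have ha0 : 0 ≤ a := frobNorm_nonneg _
  have hb0 : 0 ≤ b := frobNorm_nonneg _
  have hc0 : 0 ≤ c := frobNorm_nonneg _
  have he0 : 0 ≤ e := frobNorm_nonneg _
  -- bound on ‖zθ - zϑ‖
  have hzdiff : ‖zθ - zϑ‖ ≤ β * (b * R₂ * R₁ + R₂ * a * R₁) := by
    have hKQ : θ.2.1ᵀ * θ.1 - ϑ.2.1ᵀ * ϑ.1
        = (θ.2.1 - ϑ.2.1)ᵀ * θ.1 + ϑ.2.1ᵀ * (θ.1 - ϑ.1) := by
      rw [Matrix.transpose_sub, Matrix.sub_mul, Matrix.mul_sub]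
      abel
    have hsplit : zθ - zϑ = β • (Matrix.toEuclideanLin ((θ.2.1 - ϑ.2.1)ᵀ * θ.1) x
        + Matrix.toEuclideanLin (ϑ.2.1ᵀ * (θ.1 - ϑ.1)) x) := by
      rw [hzθ, hzϑ, ← smul_sub]
      congr 1
      rw [← toEuclideanLin_sub_apply, hKQ, toEuclideanLin_add_apply]
    rw [hsplit, norm_smul, Real.norm_eq_abs, abs_of_pos hβ]
    have h1 : ‖Matrix.toEuclideanLin ((θ.2.1 - ϑ.2.1)ᵀ * θ.1) x‖ ≤ b * R₂ * R₁ := by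
      refine (opFrob _ _ _).trans ?_
      nlinarith [mul_le_mul hθQ hxR (norm_nonneg x) hR₂.le, hb0, frobNorm_nonneg θ.1,
        norm_nonneg x]
    have h2 : ‖Matrix.toEuclideanLin (ϑ.2.1ᵀ * (θ.1 - ϑ.1)) x‖ ≤ R₂ * a * R₁ := by
      refine (opFrob _ _ _).trans ?_
      nlinarith [mul_le_mul hϑK hxR (norm_nonneg x) hR₂.le, ha0, frobNorm_nonneg ϑ.2.1,
        norm_nonneg x]
    calc β * ‖Matrix.toEuclideanLin ((θ.2.1 - ϑ.2.1)ᵀ * θ.1) x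
          + Matrix.toEuclideanLin (ϑ.2.1ᵀ * (θ.1 - ϑ.1)) x‖
        ≤ β * (‖Matrix.toEuclideanLin ((θ.2.1 - ϑ.2.1)ᵀ * θ.1) x‖
          + ‖Matrix.toEuclideanLin (ϑ.2.1ᵀ * (θ.1 - ϑ.1)) x‖) :=
          mul_le_mul_of_nonneg_left (norm_add_le _ _) hβ.le
      _ ≤ β * (b * R₂ * R₁ + R₂ * a * R₁) := by
          exact mul_le_mul_of_nonneg_left (add_le_add h1 h2) hβ.le
  -- gammaAttn facts
  have hγθR : ‖gammaAttn zθ m‖ ≤ R₁ := norm_gammaAttn_le hm zθ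
  have hγlip : ‖gammaAttn zθ m - gammaAttn zϑ m‖ ≤ 2 * R₁ ^ 2 * ‖zθ - zϑ‖ :=
    gammaAttn_lipschitz hR₁.le hm zθ zϑ
  -- decomposition of the head difference
  have hOV : θ.2.2.2ᵀ * θ.2.2.1
      = ((θ.2.2.2 - ϑ.2.2.2)ᵀ * θ.2.2.1 + ϑ.2.2.2ᵀ * (θ.2.2.1 - ϑ.2.2.1)) + ϑ.2.2.2ᵀ * ϑ.2.2.1
      := by
    rw [Matrix.transpose_sub, Matrix.sub_mul, Matrix.mul_sub]
    abel
  have hdecomp : attnHead β x m θ - attnHead β x m ϑ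
      = Matrix.toEuclideanLin ((θ.2.2.2 - ϑ.2.2.2)ᵀ * θ.2.2.1) (gammaAttn zθ m)
        + Matrix.toEuclideanLin (ϑ.2.2.2ᵀ * (θ.2.2.1 - ϑ.2.2.1)) (gammaAttn zθ m)
        + Matrix.toEuclideanLin (ϑ.2.2.2ᵀ * ϑ.2.2.1) (gammaAttn zθ m - gammaAttn zϑ m) := by
    rw [attnHead, attnHead, ← hzθ, ← hzϑ, hOV, toEuclideanLin_add_apply,
      toEuclideanLin_add_apply, map_sub]
    abel
  -- bound each term
  have hT1 : ‖Matrix.toEuclideanLin ((θ.2.2.2 - ϑ.2.2.2)ᵀ * θ.2.2.1) (gammaAttn zθ m)‖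
      ≤ e * R₂ * R₁ := by
    refine (opFrob _ _ _).trans ?_
    exact mul_le_mul (mul_le_mul_of_nonneg_left hθV he0) hγθR (norm_nonneg _)
      (mul_nonneg he0 hR₂.le)
  have hT2 : ‖Matrix.toEuclideanLin (ϑ.2.2.2ᵀ * (θ.2.2.1 - ϑ.2.2.1)) (gammaAttn zθ m)‖
      ≤ R₂ * c * R₁ := by
    refine (opFrob _ _ _).trans ?_
    exact mul_le_mul (mul_le_mul_of_nonneg_right hϑO hc0) hγθR (norm_nonneg _)
      (mul_nonneg hR₂.le hc0)
  have hT3 : ‖Matrix.toEuclideanLin (ϑ.2.2.2ᵀ * ϑ.2.2.1) (gammaAttn zθ m - gammaAttn zϑ m)‖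
      ≤ R₂ * R₂ * (2 * R₁ ^ 2 * (β * (b * R₂ * R₁ + R₂ * a * R₁))) := by
    refine (opFrob _ _ _).trans ?_
    have hlip2 : ‖gammaAttn zθ m - gammaAttn zϑ m‖
        ≤ 2 * R₁ ^ 2 * (β * (b * R₂ * R₁ + R₂ * a * R₁)) :=
      hγlip.trans (mul_le_mul_of_nonneg_left hzdiff (by positivity))
    exact mul_le_mul (mul_le_mul hϑO hϑV (frobNorm_nonneg _) hR₂.le) hlip2 (norm_nonneg _)
      (mul_nonneg hR₂.le hR₂.le)
  -- combine
  have htotal : ‖attnHead β x m θ - attnHead β x m ϑ‖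
      ≤ e * R₂ * R₁ + R₂ * c * R₁
        + R₂ * R₂ * (2 * R₁ ^ 2 * (β * (b * R₂ * R₁ + R₂ * a * R₁))) := by
    rw [hdecomp]
    refine le_trans (le_trans (norm_add_le _ _) (add_le_add (norm_add_le _ _) le_rfl)) ?_
    exact add_le_add (add_le_add hT1 hT2) hT3
  -- arithmetic
  set S := paramDiffNorm θ ϑ with hS
  have hS0 : 0 ≤ S := by rw [hS, paramDiffNorm]; exact Real.sqrt_nonneg _
  have hsum : a + b + c + e ≤ 2 * S := by
    have h4 : (a + b + c + e) ^ 2 ≤ 4 * (a ^ 2 + b ^ 2 + c ^ 2 + e ^ 2) := by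
      nlinarith [sq_nonneg (a-b), sq_nonneg (a-c), sq_nonneg (a-e), sq_nonneg (b-c),
        sq_nonneg (b-e), sq_nonneg (c-e)]
    calc a + b + c + e = Real.sqrt ((a + b + c + e) ^ 2) :=
          (Real.sqrt_sq (by linarith)).symm
      _ ≤ Real.sqrt (4 * (a ^ 2 + b ^ 2 + c ^ 2 + e ^ 2)) := Real.sqrt_le_sqrt h4
      _ = 2 * S := by
          rw [hS, paramDiffNorm, show (4:ℝ) * (a ^ 2 + b ^ 2 + c ^ 2 + e ^ 2)
              = 2 ^ 2 * (a ^ 2 + b ^ 2 + c ^ 2 + e ^ 2) by ring,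
            Real.sqrt_mul (by positivity), Real.sqrt_sq (by norm_num)]
  set M := max 1 (2 * β * R₁ ^ 2 * R₂ ^ 2) with hM
  have hM1 : (1:ℝ) ≤ M := le_max_left _ _
  have hM2 : 2 * β * R₁ ^ 2 * R₂ ^ 2 ≤ M := le_max_right _ _
  have hM0 : 0 < M := lt_of_lt_of_le one_pos hM1
  refine htotal.trans ?_
  have key : e * R₂ * R₁ + R₂ * c * R₁
      + R₂ * R₂ * (2 * R₁ ^ 2 * (β * (b * R₂ * R₁ + R₂ * a * R₁)))
      ≤ R₁ * R₂ * M * (a + b + c + e) := by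
    have e1 : e * R₂ * R₁ + R₂ * c * R₁ = R₁ * R₂ * (c + e) := by ring
    have e2 : R₂ * R₂ * (2 * R₁ ^ 2 * (β * (b * R₂ * R₁ + R₂ * a * R₁)))
        = R₁ * R₂ * ((2 * β * R₁ ^ 2 * R₂ ^ 2) * (a + b)) := by ring
    rw [e1, e2, show R₁ * R₂ * M * (a + b + c + e)
      = R₁ * R₂ * (M * (c + e)) + R₁ * R₂ * (M * (a + b)) by ring]
    apply add_le_add
    · apply mul_le_mul_of_nonneg_left _ (by positivity)
      nlinarith
    · apply mul_le_mul_of_nonneg_left _ (by positivity)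
      nlinarith
  refine key.trans ?_
  calc R₁ * R₂ * M * (a + b + c + e) ≤ R₁ * R₂ * M * (2 * S) :=
        mul_le_mul_of_nonneg_left hsum (mul_nonneg (mul_nonneg hR₁.le hR₂.le) hM0.le)
    _ = 2 * R₁ * R₂ * M * S := by ring
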